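/- Let P and Q be probability distributions on finite sets, neither of which is a uniform distribution, with H(P)/V(P) > H(Q)/V(Q), let b ∈ ℝ, and let α be the unique real solution of N_P(x)/N_{P,Q,b}(x) = G_P(x)/G_{P,Q,b}(x). Define A_1(x) = (G_P(α)/G_{P,Q,b}(α))·G_{P,Q,b}(x) for x ≤ α and A_1(x) = G_P(x) for x ≥ α. Then A_1 is continuously differentiable on ℝ and √(G_P(α)·G_{P,Q,b}(α)) + I_{P,Q,b}(∞) − I_{P,Q,b}(α) = ∫_ℝ √(A_1'(x)·N_{P,Q,b}(x)) dx. -/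

import Mathlib

open MeasureTheory Filter

namespace RNG

variable {α β : Type*}

/-- `P` is a probability distribution on the finite set `α`. -/
def IsProb [Fintype α] (P : α → ℝ) : Prop :=
  (∀ x, 0 ≤ P x) ∧ ∑ x, P x = 1

open Classical in
/-- Pushforward distribution `W(P)(y) = ∑_{x : W x = y} P x`. -/
noncomputable def push [Fintype α] (W : α → β) (P : α → ℝ) : β → ℝ :=
  fun y => ∑ x, if W x = y then P x else 0

/-- Fidelity (Bhattacharyya coefficient) between distributions on the same finite set. -/
noncomputable def fid [Fintype β] (R S : β → ℝ) : ℝ :=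
  ∑ y, Real.sqrt (R y * S y)

/-- Sum of the `l` largest values of `P`, i.e. the `l`-th partial sum of the
decreasing rearrangement of `P` (padded with zeros). -/
noncomputable def topSum [Fintype α] (P : α → ℝ) (l : ℕ) : ℝ :=
  sSup {s : ℝ | ∃ A : Finset α, A.card ≤ l ∧ s = ∑ x ∈ A, P x}

/-- Majorization `P ≺ P'` (the distributions may live on different finite sets). -/
def Maj [Fintype α] [Fintype β] (P : α → ℝ) (P' : β → ℝ) : Prop :=
  ∀ l : ℕ, topSum P l ≤ topSum P' l

/-- Maximal fidelity under deterministic transformations,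
`F^D(P → Q) = max {F(W(P), Q) | W : α → β}`. -/
noncomputable def FD [Fintype α] [Fintype β] (P : α → ℝ) (Q : β → ℝ) : ℝ :=
  sSup {r : ℝ | ∃ W : α → β, r = fid (push W P) Q}

/-- Maximal fidelity under the majorization condition,
`F^M(P → Q) = max {F(P', Q) | P ≺ P', P'` a distribution on the target set`}`. -/
noncomputable def FM [Fintype α] [Fintype β] (P : α → ℝ) (Q : β → ℝ) : ℝ :=
  sSup {r : ℝ | ∃ P' : β → ℝ, IsProb P' ∧ Maj P P' ∧ r = fid P' Q}

/-- Shannon entropy (natural logarithm). -/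
noncomputable def H [Fintype α] (P : α → ℝ) : ℝ := ∑ x, -(P x * Real.log (P x))

/-- Varentropy `V(P)` (natural logarithm). -/
noncomputable def V [Fintype α] (P : α → ℝ) : ℝ :=
  ∑ x, P x * (-Real.log (P x) - H P) ^ 2

/-- Shannon entropy, base-2 logarithm. -/
noncomputable def H2 [Fintype α] (P : α → ℝ) : ℝ := ∑ x, -(P x * Real.logb 2 (P x))

/-- Varentropy, base-2 logarithm. -/
noncomputable def V2 [Fintype α] (P : α → ℝ) : ℝ :=
  ∑ x, P x * (-Real.logb 2 (P x) - H2 P) ^ 2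

/-- The `n`-fold i.i.d. product distribution `P^n`. -/
noncomputable def iid [Fintype α] (P : α → ℝ) (n : ℕ) : (Fin n → α) → ℝ :=
  fun f => ∏ i, P (f i)

/-- The uniform distribution on a two-element set. -/
noncomputable def U2 : Fin 2 → ℝ := fun _ => 1 / 2

/-- Density of the normal distribution `N(m, v)`. -/
noncomputable def normalPDF (m v t : ℝ) : ℝ :=
  (Real.sqrt (2 * Real.pi * v))⁻¹ * Real.exp (-(t - m) ^ 2 / (2 * v))

/-- Standard normal cumulative distribution function `G`. -/
noncomputable def stdG (x : ℝ) : ℝ := ∫ t in Set.Iic x, normalPDF 0 1 t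

/-- Density `N_P` of `N(0, V(P))`. -/
noncomputable def NP [Fintype α] (P : α → ℝ) (x : ℝ) : ℝ := normalPDF 0 (V P) x

/-- Density `N_{P,Q,b}` of `N(H(Q)b, (H(P)/H(Q))·V(Q))`. -/
noncomputable def NPQ [Fintype α] [Fintype β] (P : α → ℝ) (Q : β → ℝ) (b x : ℝ) : ℝ :=
  normalPDF (H Q * b) (H P / H Q * V Q) x

/-- Cdf `G_P(x) = G(x/√V(P))`. -/
noncomputable def GP [Fintype α] (P : α → ℝ) (x : ℝ) : ℝ := stdG (x / Real.sqrt (V P))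

/-- Cdf `G_{P,Q,b}(x) = G(√(H(Q)/(H(P)V(Q)))·(x − H(Q)b))`. -/
noncomputable def GPQ [Fintype α] [Fintype β] (P : α → ℝ) (Q : β → ℝ) (b x : ℝ) : ℝ :=
  stdG (Real.sqrt (H Q / (H P * V Q)) * (x - H Q * b))

/-- `I_{P,Q,b}(x) = ∫_{−∞}^x √(N_P(t) N_{P,Q,b}(t)) dt`. -/
noncomputable def IPQ [Fintype α] [Fintype β] (P : α → ℝ) (Q : β → ℝ) (b x : ℝ) : ℝ :=
  ∫ t in Set.Iic x, Real.sqrt (NP P t * NPQ P Q b t)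

/-- `I_{P,Q,b}(∞) = ∫_ℝ √(N_P(t) N_{P,Q,b}(t)) dt`. -/
noncomputable def IPQinf [Fintype α] [Fintype β] (P : α → ℝ) (Q : β → ℝ) (b : ℝ) : ℝ :=
  ∫ t : ℝ, Real.sqrt (NP P t * NPQ P Q b t)

/-- `L^D_n(P,Q|ν)`: the maximal `L` with `F^D(P^n → Q^L) ≥ ν`. -/
noncomputable def LD [Fintype α] [Fintype β] (P : α → ℝ) (Q : β → ℝ) (ν : ℝ) (n : ℕ) : ℕ :=
  sSup {L : ℕ | ν ≤ FD (iid P n) (iid Q L)}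

/-- The optimal second order rate `R^D_2(P,Q|ν)`. -/
noncomputable def RD2 [Fintype α] [Fintype β] (P : α → ℝ) (Q : β → ℝ) (ν : ℝ) : ℝ :=
  sSup {b : ℝ | ∃ c : ℝ, ν ≤ c ∧
    Tendsto (fun n : ℕ =>
      FD (iid P n) (iid Q (⌊H P / H Q * n + b * Real.sqrt n⌋₊))) atTop (nhds c)}

open ProbabilityTheory Real Set in
lemma normalPDF_eq_gaussian {m v : ℝ} (hv : 0 ≤ v) :
    normalPDF m v = gaussianPDFReal m (NNReal.mk v hv) := rfl

open ProbabilityTheory Real Set in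
lemma integrable_normalPDF (m : ℝ) {v : ℝ} (hv : 0 ≤ v) :
    MeasureTheory.Integrable (normalPDF m v) := by
  rw [normalPDF_eq_gaussian hv]; exact integrable_gaussianPDFReal m _

open Real in
lemma normalPDF_pos (m : ℝ) {v : ℝ} (hv : 0 < v) (x : ℝ) : 0 < normalPDF m v x := by
  unfold normalPDF
  have : 0 < Real.sqrt (2 * Real.pi * v) := Real.sqrt_pos.2 (by positivity)
  positivity

lemma normalPDF_nonneg (m v x : ℝ) : 0 ≤ normalPDF m v x := by
  unfold normalPDF
  positivity

lemma continuous_normalPDF (m v : ℝ) : Continuous (normalPDF m v) := by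
  unfold normalPDF
  fun_prop

open MeasureTheory Set in
lemma integral_Iic_normalPDF {v : ℝ} (m : ℝ) (hv : 0 < v) (x : ℝ) :
    ∫ t in Set.Iic x, normalPDF m v t = stdG ((x - m) / Real.sqrt v) := by
  have hc : (0:ℝ) < Real.sqrt v := Real.sqrt_pos.2 hv
  set c := Real.sqrt v with hcdef
  have hv' : NNReal.mk v hv.le ≠ 0 := by
    exact fun h => hv.ne' (by simpa using congrArg NNReal.toReal h)
  -- map of standard gaussian
  have hmap : (ProbabilityTheory.gaussianReal 0 1).map (fun s => c * s + m)
      = ProbabilityTheory.gaussianReal m (NNReal.mk v hv.le) := by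
    have h1 : (fun s : ℝ => c * s + m) = (fun s => s + m) ∘ (fun s => c * s) := rfl
    rw [h1, ← Measure.map_map (by fun_prop) (by fun_prop)]
    rw [show (fun s : ℝ => c * s) = (c * ·) from rfl,
      ProbabilityTheory.gaussianReal_map_const_mul c]
    have h2 : (NNReal.mk (c ^ 2) (sq_nonneg _) * 1 : NNReal) = NNReal.mk v hv.le := by
      ext
      simp [hcdef, Real.sq_sqrt hv.le]
    rw [h2, show (fun s : ℝ => s + m) = (· + m) from rfl,
      ProbabilityTheory.gaussianReal_map_add_const m, mul_zero, zero_add]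
  have hpre : (fun s : ℝ => c * s + m) ⁻¹' (Set.Iic x) = Set.Iic ((x - m) / c) := by
    ext s
    simp only [mem_preimage, mem_Iic]
    rw [le_div_iff₀ hc]
    constructor <;> intro h <;> nlinarith
  have h3 : ProbabilityTheory.gaussianReal m (NNReal.mk v hv.le) (Set.Iic x)
      = ProbabilityTheory.gaussianReal 0 1 (Set.Iic ((x - m) / c)) := by
    rw [← hmap, Measure.map_apply (by fun_prop) measurableSet_Iic, hpre]
  rw [ProbabilityTheory.gaussianReal_apply_eq_integral _ hv' _,
    ProbabilityTheory.gaussianReal_apply_eq_integral _ one_ne_zero _] at h3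
  have h4 := (ENNReal.ofReal_eq_ofReal_iff
    (integral_nonneg fun t => ProbabilityTheory.gaussianPDFReal_nonneg _ _ t)
    (integral_nonneg fun t => ProbabilityTheory.gaussianPDFReal_nonneg _ _ t)).mp h3
  rw [normalPDF_eq_gaussian hv.le]
  rw [stdG]
  rw [normalPDF_eq_gaussian zero_le_one]
  convert h4 using 3
  rfl

open MeasureTheory Set intervalIntegral in
lemma stdG_pos (x : ℝ) : 0 < stdG x := by
  have hint := integrable_normalPDF 0 zero_le_one
  have hpos : ∀ t : ℝ, 0 < normalPDF 0 1 t := fun t => normalPDF_pos 0 one_pos t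
  have h1 : (0:ℝ) < ∫ t in (x-1)..x, normalPDF 0 1 t := by
    apply intervalIntegral.intervalIntegral_pos_of_pos (f := normalPDF 0 1)
    · exact hint.intervalIntegrable
    · exact hpos
    · linarith
  rw [intervalIntegral.integral_of_le (by linarith)] at h1
  have h2 : (∫ t in Ioc (x-1) x, normalPDF 0 1 t) ≤ ∫ t in Iic x, normalPDF 0 1 t := by
    apply setIntegral_mono_set hint.integrableOn
    · exact Filter.Eventually.of_forall fun t => (hpos t).le
    · exact HasSubset.Subset.eventuallyLE Ioc_subset_Iic_self
  exact lt_of_lt_of_le h1 h2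

open MeasureTheory Set in
lemma hasDerivAt_stdG (x : ℝ) : HasDerivAt stdG (normalPDF 0 1 x) x := by
  have hint := integrable_normalPDF 0 zero_le_one
  have heq : stdG = fun y => stdG 0 + ∫ t in (0:ℝ)..y, normalPDF 0 1 t := by
    funext y
    rw [← intervalIntegral.integral_Iic_sub_Iic hint.integrableOn hint.integrableOn]
    unfold stdG; ring
  rw [heq]
  apply HasDerivAt.const_add
  exact intervalIntegral.integral_hasDerivAt_right hint.intervalIntegrable
    hint.aestronglyMeasurable.stronglyMeasurableAtFilter
    (continuous_normalPDF 0 1).continuousAt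

open Real in
lemma hasDerivAt_stdG_affine {v : ℝ} (m : ℝ) (hv : 0 < v) (y : ℝ) :
    HasDerivAt (fun t => stdG ((t - m) / Real.sqrt v)) (normalPDF m v y) y := by
  have hc : (0:ℝ) < Real.sqrt v := Real.sqrt_pos.2 hv
  have h1 : HasDerivAt (fun t : ℝ => (t - m) / Real.sqrt v) (1 / Real.sqrt v) y := by
    simpa using ((hasDerivAt_id y).sub_const m).div_const (Real.sqrt v)
  have h2 := (hasDerivAt_stdG ((y - m) / Real.sqrt v)).comp y h1
  refine h2.congr_deriv ?_
  symm
  unfold normalPDF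
  rw [Real.sqrt_mul (by positivity) v,
    show -((y - m) / Real.sqrt v - 0) ^ 2 / (2 * 1)
      = -(y - m) ^ 2 / (2 * v) by rw [sub_zero, div_pow, Real.sq_sqrt hv.le]; ring,
    mul_inv]
  ring

open Real Finset in
lemma H_pos {γ : Type*} [Fintype γ] {P : γ → ℝ} (hP : IsProb P) (hV : 0 < V P) :
    0 < H P := by
  obtain ⟨hpos, hsum⟩ := hP
  have hle1 : ∀ x, P x ≤ 1 := by
    intro x
    rw [← hsum]
    exact Finset.single_le_sum (fun i _ => hpos i) (Finset.mem_univ x)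
  have hterm : ∀ x, 0 ≤ -(P x * Real.log (P x)) := by
    intro x
    have := mul_nonpos_of_nonneg_of_nonpos (hpos x) (Real.log_nonpos (hpos x) (hle1 x))
    linarith
  have hH : 0 ≤ H P := Finset.sum_nonneg fun x _ => hterm x
  rcases hH.lt_or_eq with h | h
  · exact h
  · exfalso
    have hzero : ∀ x ∈ Finset.univ, -(P x * Real.log (P x)) = 0 :=
      (Finset.sum_eq_zero_iff_of_nonneg (fun x _ => hterm x)).mp h.symm
    have hVzero : V P = 0 := by
      apply Finset.sum_eq_zero
      intro x _
      rcases (hpos x).lt_or_eq with hx | hx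
      · have hlog : Real.log (P x) = 0 := by
          have h1 := hzero x (Finset.mem_univ x)
          have h2 : P x * Real.log (P x) = 0 := by linarith
          rcases mul_eq_zero.mp h2 with h3 | h3
          · exact absurd h3.symm hx.ne
          · exact h3
        rw [hlog, ← h]
        ring
      · rw [← hx]; ring
    linarith

open MeasureTheory Set Real in
/-- the function `A_1` is continuously differentiable and
`F_1(b)` equals the fidelity between `dA_1/dx` and `N_{P,Q,b}`. -/
theorem F1_fidelity_representation {X Y : Type*} [Fintype X] [Fintype Y]
    (P : X → ℝ) (Q : Y → ℝ) (hP : IsProb P) (hQ : IsProb Q)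
    (hVP : 0 < V P) (hVQ : 0 < V Q)
    (hratio : H Q / V Q < H P / V P) (b : ℝ) (α : ℝ)
    (hα : NP P α / NPQ P Q b α = GP P α / GPQ P Q b α) :
    let A1 : ℝ → ℝ := fun x =>
      if x ≤ α then GP P α / GPQ P Q b α * GPQ P Q b x else GP P x
    ContDiff ℝ 1 A1 ∧
    Real.sqrt (GP P α * GPQ P Q b α) + IPQinf P Q b - IPQ P Q b α =
      ∫ x : ℝ, Real.sqrt (deriv A1 x * NPQ P Q b x) := by
  intro A1
  have hA1def : A1 = fun x =>
      if x ≤ α then GP P α / GPQ P Q b α * GPQ P Q b x else GP P x := rfl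
  have hHP : 0 < H P := H_pos hP hVP
  have hHQ : 0 < H Q := H_pos hQ hVQ
  set m := H Q * b with hm
  have hv : 0 < H P / H Q * V Q := by positivity
  set v := H P / H Q * V Q with hvdef
  have hNPQ : NPQ P Q b = normalPDF m v := rfl
  have hNP : NP P = normalPDF 0 (V P) := rfl
  -- GPQ and GP as affine cdfs
  have hkey : Real.sqrt (H Q / (H P * V Q)) = (Real.sqrt v)⁻¹ := by
    rw [← Real.sqrt_inv]
    congr 1
    rw [hvdef]
    field_simp
  have hGPQ : GPQ P Q b = fun y => stdG ((y - m) / Real.sqrt v) := by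
    funext y
    rw [GPQ, hkey]
    congr 1
    rw [div_eq_inv_mul]
  have hGP : GP P = fun y => stdG ((y - 0) / Real.sqrt (V P)) := by
    funext y; rw [GP, sub_zero]
  have hdGPQ : ∀ y, HasDerivAt (GPQ P Q b) (NPQ P Q b y) y := by
    intro y; rw [hGPQ, hNPQ]; exact hasDerivAt_stdG_affine m hv y
  have hdGP : ∀ y, HasDerivAt (GP P) (NP P y) y := by
    intro y; rw [hGP, hNP]; exact hasDerivAt_stdG_affine 0 hVP y
  have hGPα : 0 < GP P α := by rw [GP]; exact stdG_pos _
  have hGPQα : 0 < GPQ P Q b α := by rw [GPQ]; exact stdG_pos _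
  set c := GP P α / GPQ P Q b α with hcdef
  have hc : 0 < c := div_pos hGPα hGPQα
  have hNPQα : 0 < NPQ P Q b α := by rw [hNPQ]; exact normalPDF_pos m hv α
  have hNα : NP P α = c * NPQ P Q b α := by
    rw [div_eq_div_iff hNPQα.ne' hGPQα.ne'] at hα
    rw [hcdef]
    rw [div_mul_eq_mul_div, eq_div_iff hGPQα.ne']
    linarith
  have hval : c * GPQ P Q b α = GP P α := by
    rw [hcdef, div_mul_cancel₀ _ hGPQα.ne']
  classical
  set D : ℝ → ℝ := fun x => if x ≤ α then c * NPQ P Q b x else NP P x with hDdef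
  -- A1 has derivative D everywhere
  have hD : ∀ x, HasDerivAt A1 (D x) x := by
    intro x
    rw [hA1def]
    rcases lt_trichotomy x α with hx | hx | hx
    · have hDx : D x = c * NPQ P Q b x := if_pos hx.le
      rw [hDx]
      apply HasDerivAt.congr_of_eventuallyEq ((hdGPQ x).const_mul c)
      filter_upwards [Iio_mem_nhds hx] with t ht
      exact if_pos ht.le
    · subst hx
      have hDx : D x = c * NPQ P Q b x := if_pos le_rfl
      rw [hDx]
      have hL : HasDerivWithinAt (fun t => if t ≤ x then c * GPQ P Q b t else GP P t)
          (c * NPQ P Q b x) (Iic x) x := by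
        apply HasDerivWithinAt.congr ((hdGPQ x).const_mul c).hasDerivWithinAt
        · intro t ht
          exact if_pos ht
        · exact if_pos le_rfl
      have hR : HasDerivWithinAt (fun t => if t ≤ x then c * GPQ P Q b t else GP P t)
          (c * NPQ P Q b x) (Ici x) x := by
        have h0 := (hdGP x).hasDerivWithinAt (s := Ici x)
        rw [hNα] at h0
        apply h0.congr
        · intro t ht
          rcases eq_or_lt_of_le (Set.mem_Ici.mp ht) with h | h
          · rw [← h, if_pos le_rfl, hval]
          · rw [if_neg (not_le.2 h)]
        · rw [if_pos le_rfl, hval]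
      have h1 := hL.union hR
      rw [Iic_union_Ici] at h1
      exact h1.hasDerivAt (by simp)
    · have hDx : D x = NP P x := if_neg (not_le.2 hx)
      rw [hDx]
      apply HasDerivAt.congr_of_eventuallyEq (hdGP x)
      filter_upwards [Ioi_mem_nhds hx] with t ht
      exact if_neg (not_le.2 ht)
  have hDeq : deriv A1 = D := funext fun x => (hD x).deriv
  have hDcont : Continuous D := by
    rw [hDdef]
    apply Continuous.if_le (continuous_const.mul (continuous_normalPDF m v))
      (continuous_normalPDF 0 (V P)) continuous_id continuous_const
    intro x hx
    simp only [id_eq] at hx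
    rw [hx, ← hNPQ]
    exact hNα.symm
  refine ⟨?_, ?_⟩
  · refine contDiff_one_iff_deriv.mpr ⟨fun x => (hD x).differentiableAt, ?_⟩
    rw [hDeq]
    exact hDcont
  -- the integral identity
  have hNPQint : Integrable (NPQ P Q b) := by
    rw [hNPQ]; exact integrable_normalPDF m hv.le
  have hNPint : Integrable (NP P) := by
    rw [hNP]; exact integrable_normalPDF 0 hVP.le
  set g : ℝ → ℝ := fun x => Real.sqrt (NP P x * NPQ P Q b x) with hgdef
  have hNPQnn : ∀ x, 0 ≤ NPQ P Q b x := fun x => by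
    rw [hNPQ]; exact normalPDF_nonneg m v x
  have hNPnn : ∀ x, 0 ≤ NP P x := fun x => by
    rw [hNP]; exact normalPDF_nonneg 0 (V P) x
  have hgint : Integrable g := by
    apply Integrable.mono ((hNPint.add hNPQint).div_const 2)
    · apply Continuous.aestronglyMeasurable
      rw [hgdef, hNP, hNPQ]
      exact ((continuous_normalPDF 0 (V P)).mul (continuous_normalPDF m v)).sqrt
    · filter_upwards with x
      simp only [Pi.add_apply]
      rw [Real.norm_eq_abs, Real.norm_eq_abs, abs_of_nonneg (Real.sqrt_nonneg _),
        abs_of_nonneg (div_nonneg (add_nonneg (hNPnn x) (hNPQnn x)) two_pos.le)]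
      have h1 := Real.sq_sqrt (hNPnn x)
      have h2 := Real.sq_sqrt (hNPQnn x)
      have h3 := Real.sqrt_mul (hNPnn x) (NPQ P Q b x)
      nlinarith [sq_nonneg (Real.sqrt (NP P x) - Real.sqrt (NPQ P Q b x)),
        Real.sqrt_nonneg (NP P x), Real.sqrt_nonneg (NPQ P Q b x)]
  have hsq : ∀ x, Real.sqrt (c * NPQ P Q b x * NPQ P Q b x)
      = Real.sqrt c * NPQ P Q b x := by
    intro x
    rw [mul_assoc, Real.sqrt_mul hc.le, Real.sqrt_mul_self (hNPQnn x)]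
  have hIntIic : IntegrableOn (fun x => Real.sqrt (D x * NPQ P Q b x)) (Iic α) := by
    apply IntegrableOn.congr_fun ((hNPQint.const_mul (Real.sqrt c)).integrableOn)
      _ measurableSet_Iic
    intro x hx
    have hthis : D x = c * NPQ P Q b x := if_pos (hx : x ≤ α)
    simp only [hthis, hsq x]
  have hIntIoi : IntegrableOn (fun x => Real.sqrt (D x * NPQ P Q b x)) (Ioi α) := by
    apply IntegrableOn.congr_fun hgint.integrableOn _ measurableSet_Ioi
    intro x hx
    have hthis : D x = NP P x := if_neg (not_le.2 (hx : α < x))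
    simp only [hthis, hgdef]
  have hsplit_g : (IPQ P Q b α) + (∫ x in Ioi α, g x) = IPQinf P Q b := by
    rw [IPQ, IPQinf]
    exact intervalIntegral.integral_Iic_add_Ioi hgint.integrableOn hgint.integrableOn
  have hIicNPQ : ∫ x in Iic α, NPQ P Q b x = GPQ P Q b α := by
    rw [hNPQ, integral_Iic_normalPDF m hv α, hGPQ]
  have hstep1 : ∫ x in Iic α, Real.sqrt (D x * NPQ P Q b x)
      = Real.sqrt (GP P α * GPQ P Q b α) := by
    rw [setIntegral_congr_fun measurableSet_Iic
      (g := fun x => Real.sqrt c * NPQ P Q b x) ?_]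
    · rw [integral_const_mul, hIicNPQ, hcdef,
        Real.sqrt_div hGPα.le, Real.sqrt_mul hGPα.le]
      have h4 : GPQ P Q b α = Real.sqrt (GPQ P Q b α) * Real.sqrt (GPQ P Q b α) :=
        (Real.mul_self_sqrt hGPQα.le).symm
      rw [h4]
      have h5 : Real.sqrt (GPQ P Q b α) ≠ 0 := by positivity
      field_simp
      rw [Real.sqrt_sq (Real.sqrt_nonneg _)]
    · intro x hx
      have hthis : D x = c * NPQ P Q b x := if_pos (hx : x ≤ α)
      simp only [hthis, hsq x]
  have hstep2 : ∫ x in Ioi α, Real.sqrt (D x * NPQ P Q b x)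
      = IPQinf P Q b - IPQ P Q b α := by
    rw [setIntegral_congr_fun measurableSet_Ioi (g := g) ?_]
    · linarith
    · intro x hx
      have hthis : D x = NP P x := if_neg (not_le.2 (hx : α < x))
      simp only [hthis, hgdef]
  rw [hDeq, ← intervalIntegral.integral_Iic_add_Ioi hIntIic hIntIoi, hstep1, hstep2]
  ring

end RNG
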